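/- (Probabilistic form of Lemma 1: confidence intervals of the output ticks of Protocol 1.) Assume the Protocol 1 model with parameters ε, ε_c ∈ [0,1], τ > 0, σ_c ∈ (0, τ), σ > 0, μ > 0, an integer m ≥ 1 with μ = (m + 1/2)·τ, P(X₁ ∈ (μ − σ/2, μ + σ/2)) ≥ 1 − ε, and σ < 2μ/3. Let j ≥ 1 be an integer with j < (τ − σ_c)/(σ_c + σ). Define the intervals C^in_i = (i·(μ − σ/2), i·(μ + σ/2)) for 0 ≤ i ≤ j, C^out_0 = ((τ − σ_c)/2, (τ + σ_c)/2), and C^out_i = (i·(μ − σ_c/2) + t^out_0, i·(μ + σ_c/2) + t^out_0) for 1 ≤ i ≤ j. Then the probability that t^in_i ∈ C^in_i and t^out_i ∈ C^out_i hold simultaneously for every i ∈ {0, 1, …, j} is at least (1 − ε)^j·(1 − ε_c)^{j+1} ≥ 1 − j·ε − (j+1)·ε_c. -/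

import Mathlib

open MeasureTheory ProbabilityTheory Pointwise

/-- A Markov kernel `κ` from `ℝ` to `ℝ` satisfies the `(τ, σc, εc)`-**stability
criterion** if for every switch-on phase `s ∈ (−(τ−σc)/2, (τ−σc)/2)`, the waiting-time
distribution `κ(s)` assigns probability at least `1 − εc` to the set of waiting times
`y` with `y + s ∈ ((τ−σc)/2, (τ+σc)/2)`. -/
def StabilityCriterion (κ : Kernel ℝ ℝ) (τ σc εc : ℝ) : Prop :=
  ∀ s ∈ Set.Ioo (-((τ - σc) / 2)) ((τ - σc) / 2),
    ENNReal.ofReal (1 - εc) ≤ κ s {y | y + s ∈ Set.Ioo ((τ - σc) / 2) ((τ + σc) / 2)}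

/-- The phase of a period-`τ` clock at time `x`: the unique `s ∈ (−τ/2, τ/2]` such
that `x − s` is an integer multiple of `τ`. -/
noncomputable def phase (τ x : ℝ) : ℝ := x - τ * ⌈x / τ - 1 / 2⌉

/-- The σ-algebra generated by the input waiting times `X` together with the output
tick times `tout 0, …, tout (i−1)`; the conditioning σ-algebra for the `i`-th draw of
the enhancing clock in Protocol 1. -/
def protocolPast {Ω : Type*} [MeasurableSpace Ω] (X : ℕ → Ω → ℝ)
    (tout : ℕ → Ω → ℝ) (i : ℕ) : MeasurableSpace Ω :=
  (⨆ k, MeasurableSpace.comap (X k) inferInstance) ⊔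
    ⨆ l, ⨆ (_ : l < i), MeasurableSpace.comap (tout l) inferInstance

/-- The switch-on phase of the enhancing clock at the arrival of the `i`-th
(relevant) input tick in Protocol 1:  `s₀ = 0` (the clock starts in the reset state),
and for `i ≥ 1`, `sᵢ = t^in_i − t^out_{i−1} − mᵢ·τ` with `mᵢ` the unique integer making
`sᵢ ∈ (−τ/2, τ/2]`. -/
noncomputable def protocolPhase {Ω : Type*} (τ : ℝ) (tin tout : ℕ → Ω → ℝ)
    (i : ℕ) (ω : Ω) : ℝ :=
  if i = 0 then 0 else phase τ (tin i ω - tout (i - 1) ω)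

/-- **The Protocol 1 model** (accuracy enhancement without feedback).  It consists of:
(i) an i.i.d. sequence `(X_k)` of a.s. positive real random variables (input tick
waiting times) whose common distribution puts weight at least `1 − ε` on
`(μ − σ/2, μ + σ/2)`, with input tick times `u_k = X_1 + ⋯ + X_k`;
(ii) a Markov kernel `κ` satisfying the `(τ, σc, εc)`-stability criterion of the
enhancing clock, whose detector-off evolution has period `τ = μ/(m + 1/2)`;
(iii) random variables `t^in_0 = 0, t^in_1, …, t^in_j` and `t^out_0, …, t^out_j` such
that conditionally on `(X_k)` the waiting time `t^out_0` has law `κ(0)`, and for each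
`1 ≤ i ≤ j`, `t^in_i = min{u_k : u_k > t^out_{i−1}}` and, conditionally on `(X_k)` and
`t^out_0, …, t^out_{i−1}`, the increment `t^out_i − t^in_i` has law `κ(sᵢ)` where `sᵢ`
is the phase of `t^in_i − t^out_{i−1}` modulo `τ`. -/
structure Protocol1Model {Ω : Type*} [MeasurableSpace Ω] (P : Measure Ω)
    (ε εc τ σc σ μ : ℝ) (m : ℕ) (κ : Kernel ℝ ℝ)
    (X : ℕ → Ω → ℝ) (tin tout : ℕ → Ω → ℝ) (j : ℕ) : Prop where
  hε : ε ∈ Set.Icc (0 : ℝ) 1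
  hεc : εc ∈ Set.Icc (0 : ℝ) 1
  hτ : 0 < τ
  hσc : σc ∈ Set.Ioo 0 τ
  hσ : 0 < σ
  hμ : 0 < μ
  hm : 1 ≤ m
  hμτ : μ = (m + 1 / 2) * τ
  measX : ∀ k, Measurable (X k)
  meas_tin : ∀ i, Measurable (tin i)
  meas_tout : ∀ i, Measurable (tout i)
  indep : iIndepFun X P
  ident : ∀ k, IdentDistrib (X k) (X 0) P P
  pos : ∀ k, ∀ᵐ ω ∂P, 0 < X k ω
  conf : ENNReal.ofReal (1 - ε) ≤ P {ω | X 0 ω ∈ Set.Ioo (μ - σ / 2) (μ + σ / 2)}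
  markov : IsMarkovKernel κ
  stable : StabilityCriterion κ τ σc εc
  tin_zero : ∀ ω, tin 0 ω = 0
  tin_def : ∀ i, 1 ≤ i → i ≤ j → ∀ ω,
    tin i ω = sInf {t | (∃ k, t = ∑ l ∈ Finset.range k, X l ω) ∧ tout (i - 1) ω < t}
  cond_law : ∀ i ≤ j, ∀ B : Set ℝ, MeasurableSet B →
    ∀ A : Set Ω, MeasurableSet[protocolPast X tout i] A →
      P (A ∩ {ω | tout i ω - tin i ω ∈ B}) =
        ∫⁻ ω in A, κ (protocolPhase τ tin tout i ω) B ∂P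

lemma cond_law_ext {Ω : Type*} [mΩ : MeasurableSpace Ω] (P : Measure Ω) [IsFiniteMeasure P]
    (m' : MeasurableSpace Ω) (hm' : m' ≤ mΩ) (κ : Kernel ℝ ℝ) [IsMarkovKernel κ]
    (g f : Ω → ℝ) (hg : Measurable[mΩ] g) (hf : Measurable[m'] f)
    (law : ∀ B : Set ℝ, MeasurableSet B → ∀ A : Set Ω, MeasurableSet[m'] A →
      P (A ∩ {ω | g ω ∈ B}) = ∫⁻ ω in A, κ (f ω) B ∂P)
    (C : Set (Ω × ℝ))
    (hC : MeasurableSet[@Prod.instMeasurableSpace Ω ℝ m' _] C) :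
    P {ω | (ω, g ω) ∈ C} = ∫⁻ ω, κ (f ω) {y | (ω, y) ∈ C} ∂P := by
  have hpair : @Measurable Ω (Ω × ℝ) mΩ (@Prod.instMeasurableSpace Ω ℝ m' _)
      (fun ω => (ω, g ω)) :=
    Measurable.prodMk (measurable_id'' hm') hg
  have hsec : ∀ t : Set (Ω × ℝ), MeasurableSet[@Prod.instMeasurableSpace Ω ℝ m' _] t →
      Measurable[mΩ] fun ω => κ (f ω) (Prod.mk ω ⁻¹' t) := by
    intro t ht
    have := @Kernel.measurable_kernel_prodMk_left Ω ℝ m' _ (Kernel.comap κ f hf) _ t ht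
    simp only [Kernel.comap_apply] at this
    exact this.mono hm' le_rfl
  have hsecR : ∀ t : Set (Ω × ℝ), MeasurableSet[@Prod.instMeasurableSpace Ω ℝ m' _] t →
      ∀ ω : Ω, MeasurableSet (Prod.mk ω ⁻¹' t) :=
    fun t ht ω => (@measurable_prodMk_left Ω ℝ m' _ ω) ht
  have hsec1 : ∀ t : Set (Ω × ℝ), ∀ ω : Ω, κ (f ω) (Prod.mk ω ⁻¹' t) ≤ 1 := by
    intro t ω
    exact (measure_mono (Set.subset_univ _)).trans (by simp)
  have hfin : ∀ t : Set (Ω × ℝ),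
      ∫⁻ ω, κ (f ω) (Prod.mk ω ⁻¹' t) ∂P ≠ ⊤ := by
    intro t
    refine (lt_of_le_of_lt (lintegral_mono fun ω => hsec1 t ω) ?_).ne
    rw [lintegral_one]
    exact measure_lt_top P Set.univ
  have key : ∀ t : Set (Ω × ℝ), MeasurableSet[@Prod.instMeasurableSpace Ω ℝ m' _] t →
      P ((fun ω => (ω, g ω)) ⁻¹' t) = ∫⁻ ω, κ (f ω) (Prod.mk ω ⁻¹' t) ∂P := by
    refine @MeasurableSpace.induction_on_inter (Ω × ℝ) (@Prod.instMeasurableSpace Ω ℝ m' _)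
      (fun t _ => P ((fun ω => (ω, g ω)) ⁻¹' t) = ∫⁻ ω, κ (f ω) (Prod.mk ω ⁻¹' t) ∂P)
      _
      (@generateFrom_prod Ω ℝ m' _).symm (@isPiSystem_prod Ω ℝ m' _) (by simp) ?_ ?_ ?_
    · rintro t ⟨A, hA, B, hB, rfl⟩
      simp only [Set.mem_setOf_eq] at hA hB
      have h1 : ((fun ω => (ω, g ω)) ⁻¹' (A ×ˢ B)) = A ∩ {ω | g ω ∈ B} := by
        ext ω; simp [Set.mem_prod]
      have h2 : ∀ ω : Ω, κ (f ω) (Prod.mk ω ⁻¹' (A ×ˢ B))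
          = Set.indicator A (fun ω => κ (f ω) B) ω := by
        intro ω
        by_cases hω : ω ∈ A
        · have he : Prod.mk ω ⁻¹' (A ×ˢ B) = B := by ext y; simp [hω]
          simp [he, Set.indicator_of_mem hω]
        · have he : Prod.mk ω ⁻¹' (A ×ˢ B) = ∅ := by ext y; simp [hω]
          simp [he, Set.indicator_of_notMem hω]
      rw [h1, law B hB A hA]
      rw [lintegral_congr h2, lintegral_indicator (hm' _ hA)]
    · intro t ht hrec
      have hmt : MeasurableSet[mΩ] ((fun ω => (ω, g ω)) ⁻¹' t) := hpair ht
      have hint : ∫⁻ ω, κ (f ω) (Prod.mk ω ⁻¹' tᶜ) ∂P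
          = ∫⁻ ω, (1 - κ (f ω) (Prod.mk ω ⁻¹' t)) ∂P := by
        refine lintegral_congr fun ω => ?_
        have h : Prod.mk ω ⁻¹' tᶜ = (Prod.mk ω ⁻¹' t)ᶜ := rfl
        rw [h, measure_compl (hsecR t ht ω) (measure_ne_top _ _), measure_univ]
      rw [Set.preimage_compl, measure_compl hmt (measure_ne_top _ _), hrec, hint,
        @lintegral_sub Ω mΩ P _ _ (hsec t ht) (hfin t) (ae_of_all _ fun ω => hsec1 t ω), lintegral_one]
    · intro s hdisj hmeas hrec
      have hd : Pairwise (Function.onFun Disjoint fun i => (fun ω => (ω, g ω)) ⁻¹' s i) :=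
        fun a b hab => (hdisj hab).preimage _
      rw [Set.preimage_iUnion, measure_iUnion hd fun i => hpair (hmeas i)]
      have h3 : ∀ ω : Ω, κ (f ω) (Prod.mk ω ⁻¹' ⋃ i, s i)
          = ∑' i, κ (f ω) (Prod.mk ω ⁻¹' s i) := by
        intro ω
        rw [Set.preimage_iUnion]
        exact measure_iUnion (fun a b hab => (hdisj hab).preimage _)
          (fun i => hsecR _ (hmeas i) ω)
      rw [lintegral_congr h3, lintegral_tsum fun i => (hsec _ (hmeas i)).aemeasurable]
      exact tsum_congr hrec
  exact key C hC

lemma phase_eq' {τ x : ℝ} (hτ : 0 < τ) (n : ℤ) (h1 : -(τ/2) < x - n*τ) (h2 : x - n*τ ≤ τ/2) :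
    phase τ x = x - n*τ := by
  have hceil : ⌈x / τ - 1/2⌉ = n := by
    rw [Int.ceil_eq_iff]
    constructor
    · have hx1 : ((n:ℝ) - 1/2) * τ < x := by nlinarith
      have := (lt_div_iff₀ hτ).mpr hx1
      linarith
    · have hx2 : x ≤ ((n:ℝ) + 1/2) * τ := by nlinarith
      have := (div_le_iff₀ hτ).mpr hx2
      linarith
  unfold phase
  rw [hceil]
  ring

lemma measurable_int_cast_comp {τ : ℝ} : Measurable fun x : ℝ => ((⌈x / τ - 1 / 2⌉ : ℤ) : ℝ) :=
  Measurable.comp (measurable_from_top) (Int.measurable_ceil.comp (by fun_prop))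

lemma measurable_phase (τ : ℝ) : Measurable (phase τ) := by
  unfold phase
  exact measurable_id.sub (measurable_const.mul measurable_int_cast_comp)

lemma bern2 {ε εc : ℝ} (hε0 : 0 ≤ ε) (hε1 : ε ≤ 1) (hc0 : 0 ≤ εc) (hc1 : εc ≤ 1)
    (a b : ℕ) : 1 - a*ε - b*εc ≤ (1-ε)^a * (1-εc)^b := by
  have B1 : 1 - (a:ℝ)*ε ≤ (1-ε)^a := by
    have := one_add_mul_le_pow (by linarith : (-2:ℝ) ≤ -ε) a
    calc (1:ℝ) - a*ε = 1 + a*(-ε) := by ring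
    _ ≤ (1 + -ε)^a := this
    _ = (1-ε)^a := by ring_nf
  have B2 : 1 - (b:ℝ)*εc ≤ (1-εc)^b := by
    have := one_add_mul_le_pow (by linarith : (-2:ℝ) ≤ -εc) b
    calc (1:ℝ) - b*εc = 1 + b*(-εc) := by ring
    _ ≤ (1 + -εc)^b := this
    _ = (1-εc)^b := by ring_nf
  have P1 : (0:ℝ) ≤ (1-ε)^a := pow_nonneg (by linarith) a
  have P2 : (0:ℝ) ≤ (1-εc)^b := pow_nonneg (by linarith) b
  have ha0 : (0:ℝ) ≤ a := Nat.cast_nonneg a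
  have hb0 : (0:ℝ) ≤ b := Nat.cast_nonneg b
  rcases le_or_gt (1 - (a:ℝ)*ε) 0 with h|h
  · nlinarith
  rcases le_or_gt (1 - (b:ℝ)*εc) 0 with h'|h'
  · nlinarith
  have := mul_le_mul B1 B2 h'.le P1
  nlinarith [mul_nonneg (mul_nonneg ha0 hε0) (mul_nonneg hb0 hc0)]

set_option maxHeartbeats 2000000 in
/-- **Confidence intervals of the output ticks of Protocol 1** (probabilistic form of
Lemma 1).  Assume the Protocol 1 model with `μ = (m + 1/2)·τ`,
`P(X₁ ∈ (μ − σ/2, μ + σ/2)) ≥ 1 − ε` and `σ < 2μ/3`, and let `j ≥ 1` be an integer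
with `j < (τ − σc)/(σc + σ)`.  With `C^in_i = (i·(μ − σ/2), i·(μ + σ/2))`,
`C^out_0 = ((τ − σc)/2, (τ + σc)/2)` and
`C^out_i = (i·(μ − σc/2) + t^out_0, i·(μ + σc/2) + t^out_0)` for `1 ≤ i ≤ j`, the
probability that `t^in_i ∈ C^in_i` and `t^out_i ∈ C^out_i` hold simultaneously for all
`0 ≤ i ≤ j` is at least `(1 − ε)^j·(1 − εc)^{j+1} ≥ 1 − j·ε − (j+1)·εc`. -/
theorem protocol1_confidence_intervals {Ω : Type*} [MeasurableSpace Ω]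
    (P : Measure Ω) [IsProbabilityMeasure P]
    (ε εc τ σc σ μ : ℝ) (m : ℕ) (κ : Kernel ℝ ℝ)
    (X : ℕ → Ω → ℝ) (tin tout : ℕ → Ω → ℝ) (j : ℕ)
    (hmodel : Protocol1Model P ε εc τ σc σ μ m κ X tin tout j)
    (hσμ : σ < 2 * μ / 3) (hj : 1 ≤ j)
    (hjlt : (j : ℝ) < (τ - σc) / (σc + σ)) :
    ENNReal.ofReal (1 - j * ε - (j + 1) * εc) ≤
        ENNReal.ofReal ((1 - ε) ^ j * (1 - εc) ^ (j + 1)) ∧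
      ENNReal.ofReal ((1 - ε) ^ j * (1 - εc) ^ (j + 1)) ≤
        P {ω | ∀ i ≤ j,
          tin i ω ∈ (i : ℝ) • Set.Ioo (μ - σ / 2) (μ + σ / 2) ∧
          (if i = 0 then
              tout i ω ∈ Set.Ioo ((τ - σc) / 2) ((τ + σc) / 2)
            else
              tout i ω ∈ Set.Ioo (i * (μ - σc / 2) + tout 0 ω)
                (i * (μ + σc / 2) + tout 0 ω))} := by
  classical
  obtain ⟨hε, hεc, hτ, hσc, hσ, hμ, hm, hμτ, measX, meas_tin, meas_tout, indep, ident,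
    pos, conf, markov, stable, tin_zero, tin_def, cond_law⟩ := hmodel
  haveI := markov
  have hσc0 : 0 < σc := hσc.1
  have hσcτ : σc < τ := hσc.2
  have hε0 := hε.1
  have hε1 := hε.2
  have hc0 := hεc.1
  have hc1 := hεc.2
  have hm1 : (1:ℝ) ≤ (m:ℝ) := by exact_mod_cast hm
  have hj1 : (1:ℝ) ≤ (j:ℝ) := by exact_mod_cast hj
  have hjs : (j:ℝ) * (σc + σ) < τ - σc := by
    rw [lt_div_iff₀ (by linarith)] at hjlt; linarith
  have hwin : 0 < (τ - σc)/2 := by linarith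
  -- abbreviations (as plain defs through lets are avoided; we use explicit sets)
  set J : Set ℝ := Set.Ioo (μ - σ/2) (μ + σ/2) with hJdef
  set I0 : Set ℝ := Set.Ioo ((τ - σc)/2) ((τ + σc)/2) with hI0def
  set u : ℕ → Ω → ℝ := fun k ω => ∑ l ∈ Finset.range k, X l ω with hudef
  set Etout : ℕ → Ω → Prop := fun i ω =>
    if i = 0 then tout i ω ∈ I0
    else tout i ω ∈ Set.Ioo ((i:ℝ) * (μ - σc/2) + tout 0 ω) ((i:ℝ) * (μ + σc/2) + tout 0 ω)
    with hEdef
  set A : ℕ → Set Ω := fun n =>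
    {ω | (∀ k, 0 < X k ω) ∧ (∀ k, k < j → X k ω ∈ J) ∧ ∀ i, i < n → Etout i ω} with hAdef
  -- monotonicity of input tick times
  have hu_mono : ∀ ω, (∀ k, 0 < X k ω) → StrictMono fun k => u k ω := by
    intro ω hpos
    apply strictMono_nat_of_lt_succ
    intro k
    simp only [hudef, Finset.sum_range_succ]
    exact lt_add_of_pos_right _ (hpos k)
  -- confidence bounds for the input tick times
  have huJ : ∀ ω, (∀ k, k < j → X k ω ∈ J) → ∀ k, 1 ≤ k → k ≤ j →
      (k:ℝ)*(μ - σ/2) < u k ω ∧ u k ω < (k:ℝ)*(μ + σ/2) := by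
    intro ω hJX k hk1 hkj
    have hne : (Finset.range k).Nonempty := Finset.nonempty_range_iff.2 (by omega)
    constructor
    · have h := Finset.sum_lt_sum_of_nonempty hne
        (f := fun _ => μ - σ/2) (g := fun l => X l ω)
        (fun l hl => (hJX l (lt_of_lt_of_le (Finset.mem_range.1 hl) hkj)).1)
      rw [Finset.sum_const, Finset.card_range, nsmul_eq_mul] at h
      simpa only [hudef] using h
    · have h := Finset.sum_lt_sum_of_nonempty hne
        (f := fun l => X l ω) (g := fun _ => μ + σ/2)
        (fun l hl => (hJX l (lt_of_lt_of_le (Finset.mem_range.1 hl) hkj)).2)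
      rw [Finset.sum_const, Finset.card_range, nsmul_eq_mul] at h
      simpa only [hudef] using h
  -- the deterministic core of Lemma 1
  have hdet : ∀ ω, (∀ k, 0 < X k ω) → (∀ k, k < j → X k ω ∈ J) → ∀ n, 1 ≤ n → n ≤ j →
      (∀ l, l < n → Etout l ω) →
      tin n ω = u n ω ∧
      ((n:ℝ)-1) * (μ - σc/2) + tout 0 ω ≤ tout (n-1) ω ∧
      tout (n-1) ω ≤ ((n:ℝ)-1) * (μ + σc/2) + tout 0 ω ∧
      phase τ (u n ω - tout (n-1) ω) = u n ω - tout (n-1) ω - (m:ℝ)*τ ∧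
      (u n ω - tout (n-1) ω - (m:ℝ)*τ) ∈ Set.Ioo (-((τ - σc)/2)) ((τ-σc)/2) := by
    intro ω hpos hJX n hn1 hnj hE
    have hE0 : tout 0 ω ∈ I0 := by
      have h := hE 0 (by omega)
      simpa [hEdef] using h
    rw [hI0def, Set.mem_Ioo] at hE0
    obtain ⟨ht0l, ht0r⟩ := hE0
    have hnR : (1:ℝ) ≤ (n:ℝ) := by exact_mod_cast hn1
    have hnjR : (n:ℝ) ≤ (j:ℝ) := by exact_mod_cast hnj
    have hnsc : ((n:ℝ)-1)*(σ+σc) ≤ (j:ℝ)*(σ+σc) :=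
      mul_le_mul_of_nonneg_right (by linarith only [hnjR]) (by linarith only [hσ, hσc0])
    have hnsc' : (n:ℝ)*(σ+σc) ≤ (j:ℝ)*(σ+σc) :=
      mul_le_mul_of_nonneg_right (by linarith only [hnjR]) (by linarith only [hσ, hσc0])
    -- bounds on tout (n-1)
    have hw : ((n:ℝ)-1) * (μ - σc/2) + tout 0 ω ≤ tout (n-1) ω ∧
        tout (n-1) ω ≤ ((n:ℝ)-1) * (μ + σc/2) + tout 0 ω := by
      rcases Nat.lt_or_ge n 2 with h2 | h2
      · have hn : n = 1 := by omega
        subst hn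
        have e1 : (1:ℕ) - 1 = 0 := rfl
        rw [e1]
        have e2 : ((1:ℕ):ℝ) - 1 = 0 := by norm_num
        rw [e2]
        constructor <;> linarith only []
      · have hEn : Etout (n-1) ω := hE (n-1) (by omega)
        have hne0 : n - 1 ≠ 0 := by omega
        rw [hEdef] at hEn
        simp only [if_neg hne0] at hEn
        rw [Set.mem_Ioo] at hEn
        have hcast : ((n-1:ℕ):ℝ) = (n:ℝ) - 1 := by
          have := Nat.cast_sub (by omega : 1 ≤ n) (R := ℝ)
          simpa using this
        rw [hcast] at hEn
        exact ⟨hEn.1.le, hEn.2.le⟩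
    obtain ⟨hwl, hwr⟩ := hw
    have hu_lo := (huJ ω hJX n hn1 hnj).1
    have hu_hi := (huJ ω hJX n hn1 hnj).2
    -- u (n-1) < tout (n-1)
    have hun1w : u (n-1) ω < tout (n-1) ω := by
      rcases Nat.lt_or_ge n 2 with h2 | h2
      · have hn : n = 1 := by omega
        subst hn
        have h0 : u 0 ω = 0 := by simp [hudef]
        have e1 : (1:ℕ) - 1 = 0 := rfl
        rw [e1, h0]
        linarith
      · have hup := (huJ ω hJX (n-1) (by omega) (by omega)).2
        have hcast : ((n-1:ℕ):ℝ) = (n:ℝ) - 1 := by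
          have := Nat.cast_sub (by omega : 1 ≤ n) (R := ℝ)
          simpa using this
        rw [hcast] at hup
        linarith only [hup, hwl, ht0l, hnsc, hjs, hσ, hσc0]
    have hmτ : τ ≤ 2*(m:ℝ)*τ := by nlinarith [mul_nonneg (sub_nonneg.2 hm1) hτ.le]
    -- tout (n-1) < u n
    have hwun : tout (n-1) ω < u n ω := by
      linarith only [hwr, ht0r, hu_lo, hnsc', hjs, hmτ, hμτ, hσc0, hτ]
    -- tin n = u n
    have htin : tin n ω = u n ω := by
      rw [tin_def n hn1 hnj ω]
      have hLeast : IsLeast {t | (∃ k, t = ∑ l ∈ Finset.range k, X l ω) ∧ tout (n-1) ω < t}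
          (u n ω) := by
        constructor
        · exact ⟨⟨n, by rw [hudef]⟩, hwun⟩
        · rintro t ⟨⟨k, rfl⟩, ht⟩
          by_cases hk : n ≤ k
          · exact (hu_mono ω hpos).monotone hk
          · exfalso
            have hk1 : k ≤ n - 1 := by omega
            have : u k ω ≤ u (n-1) ω := (hu_mono ω hpos).monotone hk1
            have : u k ω < tout (n-1) ω := lt_of_le_of_lt this hun1w
            rw [hudef] at this
            simp only at this ht
            linarith
      exact hLeast.csInf_eq
    -- the phase window
    have hwin_mem : (u n ω - tout (n-1) ω - (m:ℝ)*τ) ∈ Set.Ioo (-((τ - σc)/2)) ((τ-σc)/2) := by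
      rw [Set.mem_Ioo]
      constructor
      · linarith only [hu_lo, hwr, ht0r, hnsc', hjs, hμτ]
      · linarith only [hu_hi, hwl, ht0l, hnsc', hjs, hμτ]
    have hphase : phase τ (u n ω - tout (n-1) ω) = u n ω - tout (n-1) ω - (m:ℝ)*τ := by
      have h1 : -(τ/2) < (u n ω - tout (n-1) ω) - ((m:ℤ):ℝ)*τ := by
        push_cast
        have := hwin_mem.1
        linarith
      have h2 : (u n ω - tout (n-1) ω) - ((m:ℤ):ℝ)*τ ≤ τ/2 := by
        push_cast
        have := hwin_mem.2
        linarith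
      have := phase_eq' hτ (m:ℤ) h1 h2
      push_cast at this
      exact this
    exact ⟨htin, hwl, hwr, hphase, hwin_mem⟩
  -- measurability infrastructure
  have hpast_le : ∀ n, protocolPast X tout n ≤ ‹MeasurableSpace Ω› := by
    intro n
    apply sup_le
    · exact iSup_le fun k => measurable_iff_comap_le.1 (measX k)
    · exact iSup_le fun l => iSup_le fun _ => measurable_iff_comap_le.1 (meas_tout l)
  have hXpast : ∀ n k, Measurable[protocolPast X tout n] (X k) := by
    intro n k
    rw [measurable_iff_comap_le]
    exact le_trans (le_iSup (fun k => MeasurableSpace.comap (X k) inferInstance) k) le_sup_left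
  have htoutpast : ∀ n l, l < n → Measurable[protocolPast X tout n] (tout l) := by
    intro n l hl
    rw [measurable_iff_comap_le]
    refine le_trans ?_ le_sup_right
    exact le_iSup_of_le l (le_iSup_of_le hl le_rfl)
  have hupast : ∀ n k, Measurable[protocolPast X tout n] (u k) := by
    intro n k
    have : Measurable[protocolPast X tout n] fun ω => ∑ l ∈ Finset.range k, X l ω :=
      Finset.measurable_sum _ (fun l _ => hXpast n l)
    simpa [hudef] using this
  have hEmeas : ∀ n i, i < n → MeasurableSet[protocolPast X tout n] {ω | Etout i ω} := by
    intro n i hi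
    by_cases h0 : i = 0
    · subst h0
      have he : {ω | Etout 0 ω} = tout 0 ⁻¹' I0 := by
        ext ω; simp [hEdef]
      rw [he]
      exact htoutpast n 0 hi measurableSet_Ioo
    · have he : {ω | Etout i ω} =
          (fun ω => tout i ω - tout 0 ω) ⁻¹' Set.Ioo ((i:ℝ)*(μ - σc/2)) ((i:ℝ)*(μ + σc/2)) := by
        ext ω
        simp only [hEdef, if_neg h0, Set.mem_setOf_eq, Set.mem_preimage, Set.mem_Ioo]
        constructor
        · rintro ⟨h1, h2⟩; constructor <;> linarith
        · rintro ⟨h1, h2⟩; constructor <;> linarith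
      rw [he]
      exact ((htoutpast n i hi).sub (htoutpast n 0 (by omega))) measurableSet_Ioo
  have hA_meas : ∀ n, MeasurableSet[protocolPast X tout n] (A n) := by
    intro n
    have he : A n = (⋂ k, X k ⁻¹' Set.Ioi (0:ℝ)) ∩ ((⋂ k ∈ Finset.range j, X k ⁻¹' J) ∩
        ⋂ i ∈ Finset.range n, {ω | Etout i ω}) := by
      ext ω
      simp only [hAdef, Set.mem_setOf_eq, Set.mem_inter_iff, Set.mem_iInter, Set.mem_preimage,
        Set.mem_Ioi, Finset.mem_range]
    rw [he]
    refine MeasurableSet.inter ?_ (MeasurableSet.inter ?_ ?_)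
    · exact MeasurableSet.iInter fun k => hXpast n k measurableSet_Ioi
    · exact MeasurableSet.biInter (Set.to_countable _) fun k _ => hXpast n k measurableSet_Ioo
    · exact MeasurableSet.biInter (Set.to_countable _)
        fun i hi => hEmeas n i (Finset.mem_range.1 hi)
  -- the inductive step
  have hstep : ∀ n, n ≤ j → ENNReal.ofReal (1-εc) * P (A n) ≤ P (A (n+1)) := by
    intro n hnj
    have hAn : MeasurableSet (A n) := hpast_le n _ (hA_meas n)
    have hGmeas : Measurable fun ω => tout n ω - tin n ω := (meas_tout n).sub (meas_tin n)
    -- the past-measurable version of the phase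
    set fph : Ω → ℝ := fun ω =>
      if n = 0 then 0 else phase τ (u n ω - tout (n-1) ω) with hfdef
    have hfm : Measurable[protocolPast X tout n] fph := by
      by_cases h0 : n = 0
      · subst h0
        simp only [hfdef, if_pos rfl]
        exact measurable_const
      · have h1 : Measurable[protocolPast X tout n] fun ω => u n ω - tout (n-1) ω :=
          (hupast n n).sub (htoutpast n (n-1) (by omega))
        have h2 := (measurable_phase τ).comp h1
        simp only [hfdef, if_neg h0]
        exact h2
    -- on A n, the protocol phase agrees with fph and lies in the stability window
    have hphase_agree : ∀ ω ∈ A n, protocolPhase τ tin tout n ω = fph ω := by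
      intro ω hω
      by_cases h0 : n = 0
      · subst h0; simp [protocolPhase, hfdef]
      · obtain ⟨hpos', hJX', hE'⟩ := hω
        have hd := hdet ω hpos' hJX' n (by omega) hnj hE'
        unfold protocolPhase
        rw [if_neg h0, hd.1]
        simp only [hfdef, if_neg h0]
    have hwindow : ∀ ω ∈ A n, fph ω ∈ Set.Ioo (-((τ - σc)/2)) ((τ - σc)/2) := by
      intro ω hω
      by_cases h0 : n = 0
      · subst h0
        have hz : fph ω = 0 := by simp [hfdef]
        rw [hz, Set.mem_Ioo]
        constructor <;> linarith
      · obtain ⟨hpos', hJX', hE'⟩ := hω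
        have hd := hdet ω hpos' hJX' n (by omega) hnj hE'
        simp only [hfdef, if_neg h0]
        rw [hd.2.2.2.1]
        exact hd.2.2.2.2
    -- the conditional law with respect to the restricted measure
    have law : ∀ B : Set ℝ, MeasurableSet B → ∀ S : Set Ω,
        MeasurableSet[protocolPast X tout n] S →
        (P.restrict (A n)) (S ∩ {ω | tout n ω - tin n ω ∈ B}) =
          ∫⁻ ω in S, κ (fph ω) B ∂(P.restrict (A n)) := by
      intro B hB S hS
      have hSm : MeasurableSet S := hpast_le n _ hS
      have hBset : MeasurableSet {ω | tout n ω - tin n ω ∈ B} := hGmeas hB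
      rw [Measure.restrict_apply (hSm.inter hBset)]
      have e1 : S ∩ {ω | tout n ω - tin n ω ∈ B} ∩ A n
          = (S ∩ A n) ∩ {ω | tout n ω - tin n ω ∈ B} := by
        ext ω
        simp only [Set.mem_inter_iff, Set.mem_setOf_eq]
        tauto
      rw [e1, cond_law n hnj B hB (S ∩ A n) (hS.inter (hA_meas n)),
        Measure.restrict_restrict hSm]
      exact setLIntegral_congr_fun (hSm.inter hAn)
        (fun ω hω => by simp only [hphase_agree ω hω.2])
    -- apply the extension lemma to the random shift
    have hC : MeasurableSet[@Prod.instMeasurableSpace Ω ℝ (protocolPast X tout n) _]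
        {p : Ω × ℝ | p.2 + fph p.1 ∈ I0} := by
      have h1 : @Measurable (Ω × ℝ) ℝ (@Prod.instMeasurableSpace Ω ℝ (protocolPast X tout n) _)
          _ (fun p => p.2 + fph p.1) :=
        Measurable.add (@measurable_snd Ω ℝ (protocolPast X tout n) _)
          (hfm.comp (@measurable_fst Ω ℝ (protocolPast X tout n) _))
      exact h1 measurableSet_Ioo
    have key := cond_law_ext (P.restrict (A n)) (protocolPast X tout n) (hpast_le n) κ
      (fun ω => tout n ω - tin n ω) fph hGmeas hfm law
      {p : Ω × ℝ | p.2 + fph p.1 ∈ I0} hC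
    have hev : MeasurableSet {ω | tout n ω - tin n ω + fph ω ∈ I0} :=
      (hGmeas.add (hfm.mono (hpast_le n) le_rfl)) measurableSet_Ioo
    have hLHS : P ({ω | tout n ω - tin n ω + fph ω ∈ I0} ∩ A n)
        = ∫⁻ ω, κ (fph ω) {y | y + fph ω ∈ I0} ∂(P.restrict (A n)) := by
      rw [← Measure.restrict_apply hev]
      exact key
    -- lower bound via the stability criterion
    have hsec : Measurable fun ω => κ (fph ω) {y | y + fph ω ∈ I0} := by
      have h := @Kernel.measurable_kernel_prodMk_left Ω ℝ (protocolPast X tout n) _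
        (Kernel.comap κ fph hfm) _ _ hC
      simp only [Kernel.comap_apply] at h
      exact (h.mono (hpast_le n) le_rfl)
    have hlow : ENNReal.ofReal (1 - εc) * P (A n)
        ≤ ∫⁻ ω, κ (fph ω) {y | y + fph ω ∈ I0} ∂(P.restrict (A n)) := by
      have e2 : ENNReal.ofReal (1-εc) * P (A n)
          = ∫⁻ _ω in A n, ENNReal.ofReal (1-εc) ∂P := (setLIntegral_const _ _).symm
      rw [e2]
      refine setLIntegral_mono hsec fun ω hω => ?_
      exact stable (fph ω) (hwindow ω hω)
    -- the step event is contained in A (n+1)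
    have hsub : {ω | tout n ω - tin n ω + fph ω ∈ I0} ∩ A n ⊆ A (n+1) := by
      rintro ω ⟨hI, hω⟩
      obtain ⟨hpos', hJX', hE'⟩ := hω
      refine ⟨hpos', hJX', fun i hi => ?_⟩
      rcases Nat.lt_or_ge i n with h|h
      · exact hE' i h
      · have hin : i = n := by omega
        subst hin
        by_cases h0 : i = 0
        · subst h0
          simp only [Set.mem_setOf_eq, hfdef, if_pos rfl, tin_zero ω] at hI
          simp only [hEdef, if_pos rfl]
          simpa using hI
        · obtain ⟨hd1, hd2, hd3, hd4, _⟩ := hdet ω hpos' hJX' i (by omega) hnj hE'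
          simp only [Set.mem_setOf_eq, hfdef, if_neg h0, hd1, hd4] at hI
          rw [hI0def, Set.mem_Ioo] at hI
          have hiR : (1:ℝ) ≤ (i:ℝ) := by exact_mod_cast Nat.one_le_iff_ne_zero.2 h0
          simp only [hEdef, if_neg h0, Set.mem_Ioo]
          rw [hI0def, Set.mem_Ioo] at *
          constructor
          · linarith only [hI.1, hd2, hμτ]
          · linarith only [hI.2, hd3, hμτ]
    calc ENNReal.ofReal (1-εc) * P (A n)
        ≤ ∫⁻ ω, κ (fph ω) {y | y + fph ω ∈ I0} ∂(P.restrict (A n)) := hlow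
      _ = P ({ω | tout n ω - tin n ω + fph ω ∈ I0} ∩ A n) := hLHS.symm
      _ ≤ P (A (n+1)) := measure_mono hsub
  -- the base case
  have hbase : ENNReal.ofReal ((1-ε)^j) ≤ P (A 0) := by
    have haepos : ∀ᵐ ω ∂P, ∀ k, 0 < X k ω := ae_all_iff.2 pos
    have hcongr : P (A 0) = P (⋂ k ∈ Finset.range j, X k ⁻¹' J) := by
      apply measure_congr
      rw [Filter.eventuallyEq_set]
      filter_upwards [haepos] with ω hω
      simp only [hAdef, Set.mem_setOf_eq, Set.mem_iInter, Set.mem_preimage, Finset.mem_range]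
      constructor
      · rintro ⟨_, h, _⟩ k hk; exact h k hk
      · intro h; exact ⟨hω, fun k hk => h k hk, fun i hi => absurd hi (Nat.not_lt_zero i)⟩
    rw [hcongr]
    have hprod := indep.meas_biInter (S := Finset.range j) (s := fun k => X k ⁻¹' J)
      (fun i _ => ⟨J, measurableSet_Ioo, rfl⟩)
    rw [hprod]
    have hone : ∀ k ∈ Finset.range j, ENNReal.ofReal (1-ε) ≤ P (X k ⁻¹' J) := by
      intro k _
      rw [(ident k).measure_mem_eq measurableSet_Ioo]
      exact conf
    calc ENNReal.ofReal ((1-ε)^j) = ∏ _k ∈ Finset.range j, ENNReal.ofReal (1-ε) := by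
          rw [Finset.prod_const, Finset.card_range, ENNReal.ofReal_pow (by linarith)]
      _ ≤ ∏ k ∈ Finset.range j, P (X k ⁻¹' J) := Finset.prod_le_prod' hone
  -- iterate the step
  have hiter : ∀ n, n ≤ j+1 → ENNReal.ofReal (1-εc)^n * P (A 0) ≤ P (A n) := by
    intro n
    induction n with
    | zero => intro _; simp
    | succ k ih =>
      intro hk
      calc ENNReal.ofReal (1-εc)^(k+1) * P (A 0)
          = ENNReal.ofReal (1-εc) * (ENNReal.ofReal (1-εc)^k * P (A 0)) := by ring
        _ ≤ ENNReal.ofReal (1-εc) * P (A k) := by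
            exact mul_le_mul_right (ih (by omega)) _
        _ ≤ P (A (k+1)) := hstep k (by omega)
  have hfinal : ENNReal.ofReal ((1 - ε) ^ j * (1 - εc) ^ (j + 1)) ≤ P (A (j+1)) := by
    have e3 : ENNReal.ofReal ((1 - ε) ^ j * (1 - εc) ^ (j + 1))
        = ENNReal.ofReal (1-εc)^(j+1) * ENNReal.ofReal ((1-ε)^j) := by
      rw [ENNReal.ofReal_mul (pow_nonneg (by linarith : (0:ℝ) ≤ 1-ε) j),
        ENNReal.ofReal_pow (by linarith : (0:ℝ) ≤ 1-ε),
        ENNReal.ofReal_pow (by linarith : (0:ℝ) ≤ 1-εc)]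
      ring
    rw [e3]
    exact le_trans (mul_le_mul_right hbase _) (hiter (j+1) le_rfl)
  constructor
  · apply ENNReal.ofReal_le_ofReal
    have := bern2 hε0 hε1 hc0 hc1 j (j+1)
    push_cast at this ⊢
    linarith
  · refine le_trans hfinal (measure_mono ?_)
    rintro ω ⟨hpos', hJX', hE'⟩ i hij
    constructor
    · by_cases h0 : i = 0
      · subst h0
        have hJne : J.Nonempty := Set.nonempty_Ioo.2 (by linarith)
        rw [tin_zero ω]
        simp only [Nat.cast_zero]
        rw [Set.zero_smul_set hJne]
        simp
      · have hi1 : 1 ≤ i := Nat.one_le_iff_ne_zero.2 h0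
        have hd := hdet ω hpos' hJX' i hi1 hij (fun l hl => hE' l (by omega))
        have hb := huJ ω hJX' i hi1 hij
        have hiR : (0:ℝ) < (i:ℝ) := by exact_mod_cast Nat.pos_of_ne_zero h0
        rw [hd.1]
        rw [Set.mem_smul_set_iff_inv_smul_mem₀ (ne_of_gt hiR)]
        rw [smul_eq_mul, hJdef, Set.mem_Ioo]
        rw [inv_mul_eq_div]
        constructor
        · rw [lt_div_iff₀ hiR]
          calc (μ - σ/2) * (i:ℝ) = (i:ℝ) * (μ - σ/2) := by ring
            _ < u i ω := hb.1
        · rw [div_lt_iff₀ hiR]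
          calc u i ω < (i:ℝ) * (μ + σ/2) := hb.2
            _ = (μ + σ/2) * (i:ℝ) := by ring
    · by_cases h0 : i = 0
      · subst h0
        simp only [if_pos rfl]
        have := hE' 0 (by omega)
        simpa [hEdef] using this
      · have := hE' i (by omega)
        simp only [hEdef, if_neg h0] at this
        simp only [if_neg h0]
        exact this
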